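/- arXiv:2401.08388 — 2 statements merged into one kernel-verified Lean document; each statement's English description precedes it below -/
import Mathlib

section
/- The average braid index E(Braid_c) = (tbi(c) + tbi_p(c))/(e(c) + e_p(c)) of 2-bridge knots with crossing number c satisfies E(Braid_c) → c/3 + 11/9 as c → ∞, in the sense that E(Braid_c) − (c/3 + 11/9) tends to 0. -/
set_option maxHeartbeats 1000000


/-- `e(c)`, the number of even continued fraction representations with
crossing number `c`, as a real number. -/
noncomputable def eR (c : ℕ) : ℝ := 2 / 3 * (2 ^ (c - 2) - (-1 : ℝ) ^ (c - 2))

/-- `e_p(c)`, the number of (anti-)palindromic representations with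
crossing number `c`, as a real number. -/
noncomputable def epR (c : ℕ) : ℝ :=
  2 / 3 * (2 ^ ((c - 1) / 2) - (-1 : ℝ) ^ ((c - 1) / 2))

/-- The total braid index `tbi(c)`. -/
noncomputable def tbiR (c : ℕ) : ℝ :=
  ((6 * (c : ℝ) + 22) * 2 ^ (c - 2) + (6 * (c : ℝ) - 46) * (-1) ^ c) / 27

/-- The total palindromic braid index `tbi_p(c)`. -/
noncomputable def tbipR (c : ℕ) : ℝ :=
  if Even c then
    ((3 * (c : ℝ) + 13) * 2 ^ (c / 2) + (12 * (c : ℝ) + 14) * (-1) ^ (c / 2)) / 27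
  else
    ((6 * (c : ℝ) + 14) * 2 ^ ((c - 1) / 2) - (12 * (c : ℝ) + 8) * (-1) ^ ((c - 1) / 2)) / 27

/-- The average braid index of 2-bridge knots with crossing number `c`. -/
noncomputable def avgBraid (c : ℕ) : ℝ := (tbiR c + tbipR c) / (eR c + epR c)

open Filter

private lemma abs_mul_le_aux {X t R : ℝ} (ht : 0 ≤ t) (h1 : -R ≤ X * t) (h2 : X * t ≤ R) :
    |X| * t ≤ R := by
  have h : |X| * t = |X * t| := by rw [abs_mul, abs_of_nonneg ht]
  rw [h]
  exact abs_le.mpr ⟨h1, h2⟩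

private lemma div_bound_aux {N D a B t : ℝ} (hD : 0 < D) (ht : 0 < t)
    (h1 : -(B * D) ≤ (N - a * D) * t) (h2 : (N - a * D) * t ≤ B * D) :
    |N / D - a| ≤ B / t := by
  have key : N / D - a = (N - a * D) / D := by field_simp
  rw [key, abs_div, abs_of_pos hD, div_le_div_iff₀ hD ht]
  exact abs_mul_le_aux ht.le h1 h2

private lemma hx_aux (m : ℕ) : (2 : ℝ) ≤ 2 ^ (m + 1) := by
  calc (2 : ℝ) = 2 ^ 1 := (pow_one 2).symm
  _ ≤ 2 ^ (m + 1) := by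
    apply pow_le_pow_right₀ (by norm_num)
    omega

private lemma hmx_aux (m : ℕ) : (m : ℝ) + 2 ≤ 2 ^ (m + 1) := by
  have h : m + 2 ≤ 2 ^ (m + 1) := Nat.lt_two_pow_self (n := m + 1)
  exact_mod_cast h

private lemma even_bound (m : ℕ) :
    |avgBraid (2 * m + 4) - (((2 * m + 4 : ℕ) : ℝ) / 3 + 11 / 9)| ≤
      48 * (((2 * m + 4 : ℕ) : ℝ) + 2) / 2 ^ ((2 * m + 4) / 2) := by
  have heven : Even (2 * m + 4) := by rw [Nat.even_iff]; omega
  have e1 : (2 : ℝ) ^ (2 * m + 4 - 2) = 2 ^ (m + 1) * 2 ^ (m + 1) := by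
    rw [show 2 * m + 4 - 2 = (m + 1) + (m + 1) by omega, pow_add]
  have e2 : ((-1 : ℝ)) ^ (2 * m + 4 - 2) = 1 := Even.neg_one_pow ⟨m + 1, by omega⟩
  have e3 : (2 : ℝ) ^ ((2 * m + 4 - 1) / 2) = 2 ^ (m + 1) := by
    rw [show (2 * m + 4 - 1) / 2 = m + 1 by omega]
  have e4 : ((-1 : ℝ)) ^ ((2 * m + 4 - 1) / 2) = (-1) ^ (m + 1) := by
    rw [show (2 * m + 4 - 1) / 2 = m + 1 by omega]
  have e5 : (2 : ℝ) ^ ((2 * m + 4) / 2) = 2 ^ (m + 1) * 2 := by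
    rw [show (2 * m + 4) / 2 = (m + 1) + 1 by omega, pow_succ]
  have e6 : ((-1 : ℝ)) ^ ((2 * m + 4) / 2) = (-1) ^ (m + 1) * (-1) := by
    rw [show (2 * m + 4) / 2 = (m + 1) + 1 by omega, pow_succ]
  have e7 : ((-1 : ℝ)) ^ (2 * m + 4) = 1 := Even.neg_one_pow heven
  simp only [avgBraid, eR, epR, tbiR, tbipR, if_pos heven, e1, e2, e3, e4, e5, e6, e7]
  push_cast
  have hx := hx_aux m
  have hmx := hmx_aux m
  have hm0 : (0 : ℝ) ≤ (m : ℝ) := Nat.cast_nonneg m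
  have hxx : (4 : ℝ) ≤ 2 ^ (m + 1) * 2 ^ (m + 1) := by nlinarith
  have hmxx : ((m : ℝ) + 2) * 2 ^ (m + 1) ≤ 2 ^ (m + 1) * 2 ^ (m + 1) := by
    apply mul_le_mul_of_nonneg_right hmx (by positivity)
  have hmxx' : (m : ℝ) * 4 ≤ (m : ℝ) * (2 ^ (m + 1) * 2 ^ (m + 1)) := by
    apply mul_le_mul_of_nonneg_left hxx hm0
  rcases neg_one_pow_eq_or ℝ (m + 1) with h | h <;> rw [h]
  · refine div_bound_aux (by nlinarith) (by positivity) ?_ ?_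
    · nlinarith [hx, hmx, hm0, hxx, hmxx, hmxx']
    · nlinarith [hx, hmx, hm0, hxx, hmxx, hmxx']
  · refine div_bound_aux (by nlinarith) (by positivity) ?_ ?_
    · nlinarith [hx, hmx, hm0, hxx, hmxx, hmxx']
    · nlinarith [hx, hmx, hm0, hxx, hmxx, hmxx']

private lemma odd_bound (m : ℕ) :
    |avgBraid (2 * m + 5) - (((2 * m + 5 : ℕ) : ℝ) / 3 + 11 / 9)| ≤
      48 * (((2 * m + 5 : ℕ) : ℝ) + 2) / 2 ^ ((2 * m + 5) / 2) := by
  have hodd : ¬ Even (2 * m + 5) := by rw [Nat.even_iff]; omega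
  have e1 : (2 : ℝ) ^ (2 * m + 5 - 2) = 2 ^ (m + 1) * 2 ^ (m + 1) * 2 := by
    rw [show 2 * m + 5 - 2 = ((m + 1) + (m + 1)) + 1 by omega, pow_succ, pow_add]
  have e2 : ((-1 : ℝ)) ^ (2 * m + 5 - 2) = -1 := Odd.neg_one_pow ⟨m + 1, by omega⟩
  have e3 : (2 : ℝ) ^ ((2 * m + 5 - 1) / 2) = 2 ^ (m + 1) * 2 := by
    rw [show (2 * m + 5 - 1) / 2 = (m + 1) + 1 by omega, pow_succ]
  have e4 : ((-1 : ℝ)) ^ ((2 * m + 5 - 1) / 2) = (-1) ^ (m + 1) * (-1) := by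
    rw [show (2 * m + 5 - 1) / 2 = (m + 1) + 1 by omega, pow_succ]
  have e5 : ((-1 : ℝ)) ^ (2 * m + 5) = -1 := Odd.neg_one_pow ⟨m + 2, by omega⟩
  have e6 : (2 : ℝ) ^ ((2 * m + 5) / 2) = 2 ^ (m + 1) * 2 := by
    rw [show (2 * m + 5) / 2 = (m + 1) + 1 by omega, pow_succ]
  simp only [avgBraid, eR, epR, tbiR, tbipR, if_neg hodd, e1, e2, e3, e4, e5, e6]
  push_cast
  have hx := hx_aux m
  have hmx := hmx_aux m
  have hm0 : (0 : ℝ) ≤ (m : ℝ) := Nat.cast_nonneg m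
  have hxx : (4 : ℝ) ≤ 2 ^ (m + 1) * 2 ^ (m + 1) := by nlinarith
  have hmxx : ((m : ℝ) + 2) * 2 ^ (m + 1) ≤ 2 ^ (m + 1) * 2 ^ (m + 1) := by
    apply mul_le_mul_of_nonneg_right hmx (by positivity)
  have hmxx' : (m : ℝ) * 4 ≤ (m : ℝ) * (2 ^ (m + 1) * 2 ^ (m + 1)) := by
    apply mul_le_mul_of_nonneg_left hxx hm0
  rcases neg_one_pow_eq_or ℝ (m + 1) with h | h <;> rw [h]
  · refine div_bound_aux (by nlinarith) (by positivity) ?_ ?_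
    · nlinarith [hx, hmx, hm0, hxx, hmxx, hmxx']
    · nlinarith [hx, hmx, hm0, hxx, hmxx, hmxx']
  · refine div_bound_aux (by nlinarith) (by positivity) ?_ ?_
    · nlinarith [hx, hmx, hm0, hxx, hmxx, hmxx']
    · nlinarith [hx, hmx, hm0, hxx, hmxx, hmxx']

theorem avgBraid_asymptotic :
    Filter.Tendsto (fun c : ℕ => avgBraid c - ((c : ℝ) / 3 + 11 / 9))
      Filter.atTop (nhds 0) := by
  have hbound : ∀ᶠ c in atTop,
      ‖avgBraid c - ((c : ℝ) / 3 + 11 / 9)‖ ≤ 48 * ((c : ℝ) + 2) / 2 ^ (c / 2) := by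
    rw [eventually_atTop]
    refine ⟨4, fun c hc => ?_⟩
    rw [Real.norm_eq_abs]
    rcases Nat.even_or_odd c with h | h
    · obtain ⟨m, rfl⟩ : ∃ m, c = 2 * m + 4 := by
        obtain ⟨k, hk⟩ := h
        exact ⟨k - 2, by omega⟩
      exact even_bound m
    · obtain ⟨m, rfl⟩ : ∃ m, c = 2 * m + 5 := by
        obtain ⟨k, hk⟩ := h
        exact ⟨k - 2, by omega⟩
      exact odd_bound m
  have h2 : Tendsto (fun n : ℕ => (96 * (n : ℝ) + 144) * (1 / 2 : ℝ) ^ n) atTop (nhds 0) := by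
    have ha := tendsto_self_mul_const_pow_of_lt_one (by norm_num : (0:ℝ) ≤ 1/2)
      (by norm_num : (1/2 : ℝ) < 1)
    have hb := tendsto_pow_atTop_nhds_zero_of_lt_one (by norm_num : (0:ℝ) ≤ 1/2)
      (by norm_num : (1/2 : ℝ) < 1)
    have hc := (ha.const_mul (96 : ℝ)).add (hb.const_mul (144 : ℝ))
    have heq : (fun n : ℕ => (96 * (n : ℝ) + 144) * (1 / 2 : ℝ) ^ n)
        = fun n : ℕ => 96 * ((n : ℝ) * (1 / 2 : ℝ) ^ n) + 144 * (1 / 2 : ℝ) ^ n := by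
      funext n; ring
    rw [heq]
    simpa using hc
  have hcomp : Tendsto (fun c : ℕ => c / 2) atTop atTop := by
    apply tendsto_atTop_atTop.mpr
    intro b
    exact ⟨2 * b, fun a ha => by omega⟩
  have h3 := h2.comp hcomp
  have htend : Tendsto (fun c : ℕ => 48 * ((c : ℝ) + 2) / 2 ^ (c / 2)) atTop (nhds 0) := by
    apply squeeze_zero (fun c => by positivity) (fun c => ?_) h3
    show 48 * ((c : ℝ) + 2) / 2 ^ (c / 2) ≤ (96 * ((c / 2 : ℕ) : ℝ) + 144) * (1 / 2 : ℝ) ^ (c / 2)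
    have hcast : (c : ℝ) ≤ 2 * ((c / 2 : ℕ) : ℝ) + 1 := by
      exact_mod_cast (by omega : c ≤ 2 * (c / 2) + 1)
    have hp : ((1 : ℝ) / 2) ^ (c / 2) = 1 / 2 ^ (c / 2) := by
      rw [div_pow, one_pow]
    rw [hp, mul_one_div]
    apply div_le_div_of_nonneg_right ?_ (by positivity)
    · linarith
  exact squeeze_zero_norm' hbound htend
end

section
/- The variance Var(Braid_c) = (tbi²(c)+tbi_p²(c))/(e(c)+e_p(c)) − ((tbi(c)+tbi_p(c))/(e(c)+e_p(c)))² of the braid indices of 2-bridge knots with crossing number c satisfies Var(Braid_c) − (2c/27 − 10/81) → 0 as c → ∞. -/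
set_option maxHeartbeats 1000000

/-- The total square braid index `tbi²(c)`. -/
noncomputable def tbi2R (c : ℕ) : ℝ :=
  ((3 * (c : ℝ) ^ 2 + 24 * c + 37) * 2 ^ (c - 1)
    + (12 * (c : ℝ) ^ 2 + 30 * c - 302) * (-1) ^ c) / 81

/-- The total palindromic square braid index `tbi_p²(c)`. -/
noncomputable def tbip2R (c : ℕ) : ℝ :=
  if Even c then
    ((3 * (c : ℝ) ^ 2 + 30 * c + 43) * 2 ^ (c / 2)
      + (24 * (c : ℝ) ^ 2 + 48 * c + 38) * (-1) ^ (c / 2)) / 81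
  else
    ((6 * (c : ℝ) ^ 2 + 36 * c + 14) * 2 ^ ((c - 1) / 2)
      - (24 * (c : ℝ) ^ 2 + 24 * c + 8) * (-1) ^ ((c - 1) / 2)) / 81

/-- The variance of the braid indices of 2-bridge knots with crossing number `c`. -/
noncomputable def varBraid (c : ℕ) : ℝ :=
  (tbi2R c + tbip2R c) / (eR c + epR c)
    - ((tbiR c + tbipR c) / (eR c + epR c)) ^ 2

open Filter

/-! ### Auxiliary lemmas -/

private lemma quad_geom (c0 c1 c2 : ℝ) {r : ℝ} (hr : |r| < 1) :
    Tendsto (fun k : ℕ => (c0 + c1 * (k : ℝ) + c2 * (k : ℝ) ^ 2) * r ^ k) atTop (nhds 0) := by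
  have h0 := (tendsto_pow_const_mul_const_pow_of_abs_lt_one 0 hr).const_mul c0
  have h1 := (tendsto_pow_const_mul_const_pow_of_abs_lt_one 1 hr).const_mul c1
  have h2 := (tendsto_pow_const_mul_const_pow_of_abs_lt_one 2 hr).const_mul c2
  have h := (h0.add h1).add h2
  simp only [mul_zero, add_zero] at h
  exact h.congr fun k => by ring

private lemma combine {f : ℕ → ℝ}
    (he : Tendsto (fun k => f (2 * k + 2)) atTop (nhds 0))
    (ho : Tendsto (fun k => f (2 * k + 3)) atTop (nhds 0)) :
    Tendsto f atTop (nhds 0) := by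
  rw [Metric.tendsto_atTop] at he ho ⊢
  intro ε hε
  obtain ⟨N1, h1⟩ := he ε hε
  obtain ⟨N2, h2⟩ := ho ε hε
  refine ⟨2 * N1 + 2 * N2 + 2, fun n hn => ?_⟩
  rcases Nat.even_or_odd n with ⟨m, hm⟩ | ⟨m, hm⟩
  · have hm' : n = 2 * (m - 1) + 2 := by omega
    rw [hm']; exact h1 _ (by omega)
  · have hm' : n = 2 * (m - 1) + 3 := by omega
    rw [hm']; exact h2 _ (by omega)

-- power rewriting helpers
private lemma pw2 (k : ℕ) : (2:ℝ) ^ (2 * k) = ((2:ℝ) ^ k) ^ 2 := by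
  rw [mul_comm, pow_mul]
private lemma pm1 (k : ℕ) : (-1:ℝ) ^ (2 * k) = 1 := by
  rw [pow_mul]; norm_num
private lemma p16 (k : ℕ) : (1/16:ℝ) ^ k = 1 / ((2:ℝ) ^ k) ^ 4 := by
  rw [div_pow, one_pow, show (16:ℝ) = 2 ^ 4 by norm_num, ← pow_mul, mul_comm, pow_mul]
private lemma pm16 (k : ℕ) : (-1/16:ℝ) ^ k = (-1:ℝ) ^ k / ((2:ℝ) ^ k) ^ 4 := by
  rw [div_pow, show (16:ℝ) = 2 ^ 4 by norm_num, ← pow_mul, mul_comm, pow_mul]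
private lemma p8 (k : ℕ) : (1/8:ℝ) ^ k = 1 / ((2:ℝ) ^ k) ^ 3 := by
  rw [div_pow, one_pow, show (8:ℝ) = 2 ^ 3 by norm_num, ← pow_mul, mul_comm, pow_mul]
private lemma pm8 (k : ℕ) : (-1/8:ℝ) ^ k = (-1:ℝ) ^ k / ((2:ℝ) ^ k) ^ 3 := by
  rw [div_pow, show (8:ℝ) = 2 ^ 3 by norm_num, ← pow_mul, mul_comm, pow_mul]
private lemma p4 (k : ℕ) : (1/4:ℝ) ^ k = 1 / ((2:ℝ) ^ k) ^ 2 := by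
  rw [div_pow, one_pow, show (4:ℝ) = 2 ^ 2 by norm_num, ← pow_mul, mul_comm, pow_mul]
private lemma pm4 (k : ℕ) : (-1/4:ℝ) ^ k = (-1:ℝ) ^ k / ((2:ℝ) ^ k) ^ 2 := by
  rw [div_pow, show (4:ℝ) = 2 ^ 2 by norm_num, ← pow_mul, mul_comm, pow_mul]
private lemma p2 (k : ℕ) : (1/2:ℝ) ^ k = 1 / (2:ℝ) ^ k := by
  rw [div_pow, one_pow]

/-! ### Component formulas, even case `c = 2k+2` -/

private lemma eR_even (k : ℕ) : eR (2*k+2) = 2/3 * (((2:ℝ)^k)^2 - 1) := by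
  rw [eR, show 2*k+2-2 = 2*k by omega, pw2, pm1]
private lemma epR_even (k : ℕ) : epR (2*k+2) = 2/3 * ((2:ℝ)^k - (-1:ℝ)^k) := by
  rw [epR, show (2*k+2-1)/2 = k by omega]
private lemma tbiR_even (k : ℕ) :
    tbiR (2*k+2) = ((12*(k:ℝ)+34) * ((2:ℝ)^k)^2 + (12*(k:ℝ)-34)) / 27 := by
  rw [tbiR, show 2*k+2-2 = 2*k by omega, pw2, show 2*k+2 = 2*(k+1) by ring, pm1]
  push_cast; ring
private lemma tbipR_even (k : ℕ) :
    tbipR (2*k+2) = ((12*(k:ℝ)+38) * (2:ℝ)^k - (24*(k:ℝ)+38) * (-1:ℝ)^k) / 27 := by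
  have hkev : Even (2*k+2) := ⟨k+1, by ring⟩
  rw [tbipR, if_pos hkev, show (2*k+2)/2 = k+1 by omega,
    pow_succ (2:ℝ) k, pow_succ (-1:ℝ) k]
  push_cast; ring
private lemma tbi2R_even (k : ℕ) :
    tbi2R (2*k+2) = ((12*(k:ℝ)^2+72*k+97) * (2*((2:ℝ)^k)^2)
      + (48*(k:ℝ)^2+156*k-194)) / 81 := by
  rw [tbi2R, show 2*k+2-1 = 2*k+1 by omega, pow_succ (2:ℝ) (2*k), pw2,
    show 2*k+2 = 2*(k+1) by ring, pm1]
  push_cast; ring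
private lemma tbip2R_even (k : ℕ) :
    tbip2R (2*k+2) = ((24*(k:ℝ)^2+168*k+230) * (2:ℝ)^k
      - (96*(k:ℝ)^2+288*k+230) * (-1:ℝ)^k) / 81 := by
  have hkev : Even (2*k+2) := ⟨k+1, by ring⟩
  rw [tbip2R, if_pos hkev, show (2*k+2)/2 = k+1 by omega,
    pow_succ (2:ℝ) k, pow_succ (-1:ℝ) k]
  push_cast; ring

/-! ### Component formulas, odd case `c = 2k+3` -/

private lemma eR_odd (k : ℕ) : eR (2*k+3) = 2/3 * (2*((2:ℝ)^k)^2 + 1) := by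
  rw [eR, show 2*k+3-2 = 2*k+1 by omega, pow_succ (2:ℝ) (2*k), pw2,
    pow_succ (-1:ℝ) (2*k), pm1]
  ring
private lemma epR_odd (k : ℕ) : epR (2*k+3) = 2/3 * (2*(2:ℝ)^k + (-1:ℝ)^k) := by
  rw [epR, show (2*k+3-1)/2 = k+1 by omega, pow_succ (2:ℝ) k, pow_succ (-1:ℝ) k]
  ring
private lemma tbiR_odd (k : ℕ) :
    tbiR (2*k+3) = ((12*(k:ℝ)+40) * (2*((2:ℝ)^k)^2) - (12*(k:ℝ)-28)) / 27 := by
  rw [tbiR, show 2*k+3-2 = 2*k+1 by omega, pow_succ (2:ℝ) (2*k), pw2,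
    show 2*k+3 = 2*(k+1)+1 by ring, pow_succ (-1:ℝ) (2*(k+1)), pm1]
  push_cast; ring
private lemma tbipR_odd (k : ℕ) :
    tbipR (2*k+3) = ((24*(k:ℝ)+64) * (2:ℝ)^k + (24*(k:ℝ)+44) * (-1:ℝ)^k) / 27 := by
  have hodd : ¬ Even (2*k+3) := by rintro ⟨r, hr⟩; omega
  rw [tbipR, if_neg hodd, show (2*k+3-1)/2 = k+1 by omega,
    pow_succ (2:ℝ) k, pow_succ (-1:ℝ) k]
  push_cast; ring
private lemma tbi2R_odd (k : ℕ) :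
    tbi2R (2*k+3) = ((12*(k:ℝ)^2+84*k+136) * (4*((2:ℝ)^k)^2)
      - (48*(k:ℝ)^2+204*k-104)) / 81 := by
  rw [tbi2R, show 2*k+3-1 = 2*(k+1) by omega, pw2 (k+1), pow_succ (2:ℝ) k,
    show 2*k+3 = 2*(k+1)+1 by ring, pow_succ (-1:ℝ) (2*(k+1)), pm1]
  push_cast; ring
private lemma tbip2R_odd (k : ℕ) :
    tbip2R (2*k+3) = ((48*(k:ℝ)^2+288*k+352) * (2:ℝ)^k
      + (96*(k:ℝ)^2+336*k+296) * (-1:ℝ)^k) / 81 := by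
  have hodd : ¬ Even (2*k+3) := by rintro ⟨r, hr⟩; omega
  rw [tbip2R, if_neg hodd, show (2*k+3-1)/2 = k+1 by omega,
    pow_succ (2:ℝ) k, pow_succ (-1:ℝ) k]
  push_cast; ring

private lemma frac_helper (A B E T R S : ℝ) (hE : E ≠ 0) (hS : S ≠ 0)
    (h : (A * E - B ^ 2 - T * E ^ 2) * S = R * E ^ 2) :
    A / E - (B / E) ^ 2 - T = R / S := by
  have h1 : A / E - (B / E) ^ 2 - T = (A * E - B ^ 2 - T * E ^ 2) / E ^ 2 := by
    field_simp
  rw [h1, div_eq_div_iff (pow_ne_zero 2 hE) hS]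
  exact h

/-! ### The explicit asymptotic expansions -/

noncomputable def NumE (k : ℕ) : ℝ :=
    (-8/81 + (-104/243) * (k:ℝ) + (-16/27) * (k:ℝ)^2) * (1/16 : ℝ)^k
  + (-56/729 + (-8/243) * (k:ℝ) + (32/27) * (k:ℝ)^2) * (-1/16 : ℝ)^k
  + (56/729 + (-8/81) * (k:ℝ) + (-16/81) * (k:ℝ)^2) * (1/8 : ℝ)^k
  + (16/81 + (32/243) * (k:ℝ) + (-16/81) * (k:ℝ)^2) * (-1/8 : ℝ)^k
  + (-8/81 + (8/27) * (k:ℝ) + (-16/81) * (k:ℝ)^2) * (1/4 : ℝ)^k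
  + (56/729 + (16/243) * (k:ℝ) + (-16/81) * (k:ℝ)^2) * (-1/4 : ℝ)^k
  + (-56/729 + (16/243) * (k:ℝ) + 0 * (k:ℝ)^2) * (1/2 : ℝ)^k

noncomputable def DenE (k : ℕ) : ℝ :=
  (2/3 * (1 + (1/2 : ℝ)^k - (1/4 : ℝ)^k - (-1/4 : ℝ)^k))^2

noncomputable def NumO (k : ℕ) : ℝ :=
    (-128/243 + (-248/243) * (k:ℝ) + (-16/27) * (k:ℝ)^2) * (1/16 : ℝ)^k
  + (-128/729 + (136/243) * (k:ℝ) + (32/27) * (k:ℝ)^2) * (-1/16 : ℝ)^k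
  + (-352/729 + (-80/81) * (k:ℝ) + (32/81) * (k:ℝ)^2) * (1/8 : ℝ)^k
  + (-32/243 + (128/243) * (k:ℝ) + (32/81) * (k:ℝ)^2) * (-1/8 : ℝ)^k
  + (-32/243 + (16/81) * (k:ℝ) + (32/81) * (k:ℝ)^2) * (1/4 : ℝ)^k
  + (-352/729 + (-32/243) * (k:ℝ) + (32/81) * (k:ℝ)^2) * (-1/4 : ℝ)^k
  + (256/729 + (64/243) * (k:ℝ) + 0 * (k:ℝ)^2) * (1/2 : ℝ)^k

noncomputable def DenO (k : ℕ) : ℝ :=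
  (2/3 * (2 + 2*(1/2 : ℝ)^k + (1/4 : ℝ)^k + (-1/4 : ℝ)^k))^2

private lemma identE (k : ℕ) (hk : 1 ≤ k) :
    varBraid (2*k+2) - (2 * ((2*k+2 : ℕ) : ℝ) / 27 - 10 / 81) = NumE k / DenE k := by
  have hx2 : (2:ℝ) ≤ 2^k := by
    calc (2:ℝ) = 2^1 := by norm_num
    _ ≤ 2^k := by exact pow_le_pow_right₀ (by norm_num) hk
  have hx0 : ((2:ℝ)^k) ≠ 0 := by positivity
  rw [varBraid, eR_even, epR_even, tbiR_even, tbipR_even, tbi2R_even, tbip2R_even,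
    NumE, DenE, p16 k, pm16 k, p8 k, pm8 k, p4 k, pm4 k, p2 k]
  push_cast
  rcases Nat.even_or_odd k with hke | hko
  · rw [hke.neg_one_pow]
    generalize (2:ℝ)^k = x at hx2 hx0 ⊢
    have hxp : (0:ℝ) < x := by linarith
    apply frac_helper
    · nlinarith
    · have hin : 1 + 1/x - 1/x^2 - 1/x^2 = (x^2 + x - 2)/x^2 := by
        field_simp; ring
      rw [hin]
      have h1 : (0:ℝ) < x^2 + x - 2 := by nlinarith
      positivity
    · field_simp
      ring
  · rw [hko.neg_one_pow]
    generalize (2:ℝ)^k = x at hx2 hx0 ⊢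
    have hxp : (0:ℝ) < x := by linarith
    apply frac_helper
    · nlinarith
    · have hin : 1 + 1/x - 1/x^2 - -1/x^2 = (x + 1)/x := by
        field_simp; ring
      rw [hin]
      have h1 : (0:ℝ) < x + 1 := by nlinarith
      positivity
    · field_simp
      ring

private lemma identO (k : ℕ) :
    varBraid (2*k+3) - (2 * ((2*k+3 : ℕ) : ℝ) / 27 - 10 / 81) = NumO k / DenO k := by
  have hx2 : (1:ℝ) ≤ 2^k := one_le_pow₀ (by norm_num)
  have hx0 : ((2:ℝ)^k) ≠ 0 := by positivity
  rw [varBraid, eR_odd, epR_odd, tbiR_odd, tbipR_odd, tbi2R_odd, tbip2R_odd,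
    NumO, DenO, p16 k, pm16 k, p8 k, pm8 k, p4 k, pm4 k, p2 k]
  push_cast
  rcases Nat.even_or_odd k with hke | hko
  · rw [hke.neg_one_pow]
    generalize (2:ℝ)^k = x at hx2 hx0 ⊢
    have hxp : (0:ℝ) < x := by linarith
    apply frac_helper
    · nlinarith
    · have hin : 2 + 2*(1/x) + 1/x^2 + 1/x^2 = (2*x^2 + 2*x + 2)/x^2 := by
        field_simp; ring
      rw [hin]
      have h1 : (0:ℝ) < 2*x^2 + 2*x + 2 := by nlinarith
      positivity
    · field_simp
      ring
  · rw [hko.neg_one_pow]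
    generalize (2:ℝ)^k = x at hx2 hx0 ⊢
    have hxp : (0:ℝ) < x := by linarith
    apply frac_helper
    · nlinarith
    · have hin : 2 + 2*(1/x) + 1/x^2 + -1/x^2 = (2*x + 2)/x := by
        field_simp; ring
      rw [hin]
      have h1 : (0:ℝ) < 2*x + 2 := by nlinarith
      positivity
    · field_simp
      ring

/-! ### Limits -/

private lemma tendsto_NumE : Tendsto NumE atTop (nhds 0) := by
  have h := ((((((quad_geom (-8/81) (-104/243) (-16/27) (by rw [abs_lt]; norm_num : |(1/16:ℝ)| < 1)).add
    (quad_geom (-56/729) (-8/243) (32/27) (by rw [abs_lt]; norm_num : |(-1/16:ℝ)| < 1))).add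
    (quad_geom (56/729) (-8/81) (-16/81) (by rw [abs_lt]; norm_num : |(1/8:ℝ)| < 1))).add
    (quad_geom (16/81) (32/243) (-16/81) (by rw [abs_lt]; norm_num : |(-1/8:ℝ)| < 1))).add
    (quad_geom (-8/81) (8/27) (-16/81) (by rw [abs_lt]; norm_num : |(1/4:ℝ)| < 1))).add
    (quad_geom (56/729) (16/243) (-16/81) (by rw [abs_lt]; norm_num : |(-1/4:ℝ)| < 1))).add
    (quad_geom (-56/729) (16/243) 0 (by rw [abs_lt]; norm_num : |(1/2:ℝ)| < 1))
  simp only [add_zero] at h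
  exact h

private lemma tendsto_NumO : Tendsto NumO atTop (nhds 0) := by
  have h := ((((((quad_geom (-128/243) (-248/243) (-16/27) (by rw [abs_lt]; norm_num : |(1/16:ℝ)| < 1)).add
    (quad_geom (-128/729) (136/243) (32/27) (by rw [abs_lt]; norm_num : |(-1/16:ℝ)| < 1))).add
    (quad_geom (-352/729) (-80/81) (32/81) (by rw [abs_lt]; norm_num : |(1/8:ℝ)| < 1))).add
    (quad_geom (-32/243) (128/243) (32/81) (by rw [abs_lt]; norm_num : |(-1/8:ℝ)| < 1))).add
    (quad_geom (-32/243) (16/81) (32/81) (by rw [abs_lt]; norm_num : |(1/4:ℝ)| < 1))).add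
    (quad_geom (-352/729) (-32/243) (32/81) (by rw [abs_lt]; norm_num : |(-1/4:ℝ)| < 1))).add
    (quad_geom (256/729) (64/243) 0 (by rw [abs_lt]; norm_num : |(1/2:ℝ)| < 1))
  simp only [add_zero] at h
  exact h

private lemma tendsto_DenE : Tendsto DenE atTop (nhds (4/9)) := by
  have h2 := tendsto_pow_atTop_nhds_zero_of_abs_lt_one (by rw [abs_lt]; norm_num : |(1/2:ℝ)| < 1)
  have h4 := tendsto_pow_atTop_nhds_zero_of_abs_lt_one (by rw [abs_lt]; norm_num : |(1/4:ℝ)| < 1)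
  have h4' := tendsto_pow_atTop_nhds_zero_of_abs_lt_one (by rw [abs_lt]; norm_num : |(-1/4:ℝ)| < 1)
  have hc : Tendsto (fun _ : ℕ => (1:ℝ)) atTop (nhds 1) := tendsto_const_nhds
  have h := ((((hc.add h2).sub h4).sub h4').const_mul (2/3:ℝ)).pow 2
  rw [show ((2/3:ℝ) * ((1:ℝ) + 0 - 0 - 0))^2 = 4/9 by norm_num] at h
  exact h

private lemma tendsto_DenO : Tendsto DenO atTop (nhds (16/9)) := by
  have h2 := (tendsto_pow_atTop_nhds_zero_of_abs_lt_one
    (by rw [abs_lt]; norm_num : |(1/2:ℝ)| < 1)).const_mul (2:ℝ)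
  have h4 := tendsto_pow_atTop_nhds_zero_of_abs_lt_one (by rw [abs_lt]; norm_num : |(1/4:ℝ)| < 1)
  have h4' := tendsto_pow_atTop_nhds_zero_of_abs_lt_one (by rw [abs_lt]; norm_num : |(-1/4:ℝ)| < 1)
  have hc : Tendsto (fun _ : ℕ => (2:ℝ)) atTop (nhds 2) := tendsto_const_nhds
  have h := ((((hc.add h2).add h4).add h4').const_mul (2/3:ℝ)).pow 2
  rw [show ((2/3:ℝ) * ((2:ℝ) + 2 * 0 + 0 + 0))^2 = 16/9 by norm_num] at h
  exact h

theorem varBraid_asymptotic :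
    Filter.Tendsto (fun c : ℕ => varBraid c - (2 * (c : ℝ) / 27 - 10 / 81))
      Filter.atTop (nhds 0) := by
  apply combine
  · have hlim : Tendsto (fun k : ℕ => NumE k / DenE k) atTop (nhds 0) := by
      have h := tendsto_NumE.div tendsto_DenE (by norm_num)
      rw [zero_div] at h; exact h
    apply hlim.congr'
    filter_upwards [eventually_ge_atTop 1] with k hk
    exact (identE k hk).symm
  · have hlim : Tendsto (fun k : ℕ => NumO k / DenO k) atTop (nhds 0) := by
      have h := tendsto_NumO.div tendsto_DenO (by norm_num)
      rw [zero_div] at h; exact h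
    exact hlim.congr fun k => (identO k).symm
end
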